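/- Soundness of constraint typing: let σ be a type substitution. If Δ ⊩ e : T | C is derivable by the constraint typing rules and σ ⊨ C, then σ(Δ) ⊢ e : σ(T) is derivable in (λ•→)⁻ and σ(T) is a type. -/

import Mathlib

namespace LambdaBullet

/-- Head constructors for pseudo-types. -/
inductive TyHead : Type
  | var (n : ℕ)
  | nat
  | prod
  | arrow
  | bullet

/-- Arity of each pseudo-type constructor. -/
def tyArity : TyHead → Type
  | .var _ => Empty
  | .nat => Empty
  | .prod => Bool
  | .arrow => Bool
  | .bullet => Unit

/-- The polynomial functor whose M-type is the type of pseudo-types. -/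
def TyP : PFunctor := ⟨TyHead, tyArity⟩

/-- Pseudo-types: possibly infinite coinductively generated trees. -/
abbrev PseudoType := TyP.M

/-- Type variable. -/
def tvar (n : ℕ) : PseudoType := PFunctor.M.mk ⟨TyHead.var n, Empty.elim⟩
/-- The type `Nat`. -/
def tnat : PseudoType := PFunctor.M.mk ⟨TyHead.nat, Empty.elim⟩
/-- Product type. -/
def tprod (t s : PseudoType) : PseudoType :=
  PFunctor.M.mk ⟨TyHead.prod, fun b => bif b then s else t⟩
/-- Arrow type. -/
def tarrow (t s : PseudoType) : PseudoType :=
  PFunctor.M.mk ⟨TyHead.arrow, fun b => bif b then s else t⟩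
/-- Delay type `•t`. -/
def tbullet (t : PseudoType) : PseudoType :=
  PFunctor.M.mk ⟨TyHead.bullet, fun _ => t⟩
/-- Iterated delay `•ⁿ t`. -/
def tbulletN (n : ℕ) (t : PseudoType) : PseudoType := tbullet^[n] t

/-- `Child t s` holds iff `s` is an immediate subtree of `t`. -/
def Child (t s : PseudoType) : Prop := ∃ b : TyP.B t.dest.1, t.dest.2 b = s

/-- `Subtree t s` holds iff `s` is a subtree of `t`. -/
def Subtree (t s : PseudoType) : Prop := Relation.ReflTransGen Child t s

/-- A pseudo-type is regular if it has finitely many distinct subtrees. -/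
def Regular (t : PseudoType) : Prop := {s | Subtree t s}.Finite

/-- The root of the tree is a `•`. -/
def headIsBullet (t : PseudoType) : Prop := t.dest.1 = TyHead.bullet

/-- A pseudo-type is guarded if every infinite path in its tree has
infinitely many `•`'s. -/
def Guarded (t : PseudoType) : Prop :=
  ∀ f : ℕ → PseudoType, f 0 = t → (∀ n, Child (f n) (f (n + 1))) →
    ∀ N, ∃ n, N ≤ n ∧ headIsBullet (f n)

/-- A type is a regular and guarded pseudo-type. -/
def IsType (t : PseudoType) : Prop := Regular t ∧ Guarded t

/-- `•^∞`: the unique pseudo-type satisfying `•^∞ = • •^∞`. -/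
def binf : PseudoType := PFunctor.M.corec (fun _ : Unit => ⟨TyHead.bullet, fun _ => ()⟩) ()

/-- Constants. -/
inductive Const : Type
  | pair
  | cfst
  | csnd
  | zero
  | succ

/-- Expressions (with de Bruijn indices for variables). -/
inductive Expr : Type
  | var (x : ℕ)
  | const (k : Const)
  | lam (e : Expr)
  | app (e₁ e₂ : Expr)

def liftRen (f : ℕ → ℕ) : ℕ → ℕ
  | 0 => 0
  | n + 1 => f n + 1

def rename (f : ℕ → ℕ) : Expr → Expr
  | .var n => .var (f n)
  | .const k => .const k
  | .lam e => .lam (rename (liftRen f) e)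
  | .app a b => .app (rename f a) (rename f b)

def liftSub (ρ : ℕ → Expr) : ℕ → Expr
  | 0 => .var 0
  | n + 1 => rename Nat.succ (ρ n)

/-- Simultaneous (capture-avoiding) substitution. -/
def substE (ρ : ℕ → Expr) : Expr → Expr
  | .var n => ρ n
  | .const k => .const k
  | .lam e => .lam (substE (liftSub ρ) e)
  | .app a b => .app (substE ρ a) (substE ρ b)

/-- `subst0 e f` is `e[f/x]` for the topmost variable `x`. -/
def subst0 (e f : Expr) : Expr :=
  substE (fun n => match n with | 0 => f | n + 1 => .var n) e

/-- The pair `⟨e₁, e₂⟩`. -/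
def mkPair (e₁ e₂ : Expr) : Expr := .app (.app (.const .pair) e₁) e₂

/-- Evaluation contexts E ::= [] | E e | fst E | snd E | succ E. -/
inductive ECtx : Type
  | hole
  | app (E : ECtx) (e : Expr)
  | fst (E : ECtx)
  | snd (E : ECtx)
  | succ (E : ECtx)

/-- Plugging an expression into an evaluation context. -/
def ECtx.plug : ECtx → Expr → Expr
  | .hole, e => e
  | .app E f, e => .app (E.plug e) f
  | .fst E, e => .app (.const .cfst) (E.plug e)
  | .snd E, e => .app (.const .csnd) (E.plug e)
  | .succ E, e => .app (.const .succ) (E.plug e)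

/-- Head reduction rules. -/
inductive HeadRed : Expr → Expr → Prop
  | beta (e f) : HeadRed (.app (.lam e) f) (subst0 e f)
  | fst (e₁ e₂) : HeadRed (.app (.const .cfst) (mkPair e₁ e₂)) e₁
  | snd (e₁ e₂) : HeadRed (.app (.const .csnd) (mkPair e₁ e₂)) e₂

/-- Weak head (call-by-name) reduction: head rules closed under evaluation contexts. -/
def Red (a b : Expr) : Prop :=
  ∃ (E : ECtx) (e f : Expr), HeadRed e f ∧ a = E.plug e ∧ b = E.plug f

/-- Many-step reduction. -/
def RedStar : Expr → Expr → Prop := Relation.ReflTransGen Red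

/-- (Weak head) normal forms. -/
def NormalForm (e : Expr) : Prop := ∀ f, ¬ Red e f

/-- Typing contexts: finite maps from (de Bruijn) variables to types. -/
def Ctx : Type := ℕ → Option PseudoType

/-- Extending a typing context with a type for the topmost variable. -/
def Ctx.cons (t : PseudoType) (Γ : Ctx) : Ctx :=
  fun n => match n with | 0 => some t | n + 1 => Γ n

/-- The type assignment κ for constants. -/
inductive KappaTy : Const → PseudoType → Prop
  | pair {t s} : IsType t → IsType s →
      KappaTy .pair (tarrow t (tarrow s (tprod t s)))
  | fst {t s} : IsType t → IsType s →
      KappaTy .cfst (tarrow (tprod t s) t)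
  | snd {t s} : IsType t → IsType s →
      KappaTy .csnd (tarrow (tprod t s) s)
  | zero : KappaTy .zero tnat
  | succ : KappaTy .succ (tarrow tnat tnat)

/-- The type assignment system λ•→. -/
inductive Types : Ctx → Expr → PseudoType → Prop
  | ax {Γ x t} : Γ x = some t → IsType t → Types Γ (.var x) t
  | const {Γ k t} : KappaTy k t → Types Γ (.const k) t
  | bulletI {Γ e t} : Types Γ e t → Types Γ e (tbullet t)
  | arrowI {Γ e n t s} :
      Types (Ctx.cons (tbulletN n t) Γ) e (tbulletN n s) →
      Types Γ (.lam e) (tbulletN n (tarrow t s))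
  | arrowE {Γ e₁ e₂ n t s} :
      Types Γ e₁ (tbulletN n (tarrow t s)) → Types Γ e₂ (tbulletN n t) →
      Types Γ (.app e₁ e₂) (tbulletN n s)


/-- The syntax-directed type assignment system (λ•→)⁻: the rule (•I) is
removed and the `•`'s are introduced in the rules (axiom) and (const). -/
inductive TypesSD : Ctx → Expr → PseudoType → Prop
  | ax {Γ x t} (n : ℕ) : Γ x = some t → IsType t →
      TypesSD Γ (.var x) (tbulletN n t)
  | const {Γ k t} (n : ℕ) : KappaTy k t →
      TypesSD Γ (.const k) (tbulletN n t)
  | arrowI {Γ e n t s} :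
      TypesSD (Ctx.cons (tbulletN n t) Γ) e (tbulletN n s) →
      TypesSD Γ (.lam e) (tbulletN n (tarrow t s))
  | arrowE {Γ e₁ e₂ n t s} :
      TypesSD Γ e₁ (tbulletN n (tarrow t s)) → TypesSD Γ e₂ (tbulletN n t) →
      TypesSD Γ (.app e₁ e₂) (tbulletN n s)

/-- Integer expressions. -/
inductive IExp : Type
  | ivar (N : ℕ)
  | lit (n : ℤ)
  | add (E₁ E₂ : IExp)
  | sub (E₁ E₂ : IExp)

/-- Finite meta-types. -/
inductive MetaTy : Type
  | tvar (X : ℕ)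
  | nat
  | prod (T S : MetaTy)
  | arrow (T S : MetaTy)
  | bullet (E : IExp) (T : MetaTy)

/-- Constraints: meta-type equality constraints (between finite meta-types)
and integer constraints. -/
inductive Constr : Type
  | eqT (T S : MetaTy)
  | eqE (E E' : IExp)
  | geE (E E' : IExp)
  | ltE (E E' : IExp)

/-- Evaluation of an integer expression under a natural substitution `θ` for
the integer variables (a partial map from integer variables to natural
numbers). -/
def evalE (θ : ℕ → Option ℕ) : IExp → ℤ
  | .ivar N => ((θ N).getD 0 : ℕ)
  | .lit n => n
  | .add a b => evalE θ a + evalE θ b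
  | .sub a b => evalE θ a - evalE θ b

/-- Application of a (type) substitution `σ = τ ∪ θ` to a finite meta-type:
`τ` is the (partial) assignment of pseudo-types to the type variables
(already instantiated by `θ`), and `θ` assigns natural numbers to the
integer variables.  The identifications `•^0 T = T` and
`•^E •^E' T = •^{E+E'} T` hold automatically in the result. -/
def applyMeta (τ : ℕ → Option PseudoType) (θ : ℕ → Option ℕ) : MetaTy → PseudoType
  | .tvar X => (τ X).getD (tvar X)
  | .nat => tnat
  | .prod T S => tprod (applyMeta τ θ T) (applyMeta τ θ S)
  | .arrow T S => tarrow (applyMeta τ θ T) (applyMeta τ θ S)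
  | .bullet E T => tbulletN (evalE θ E).toNat (applyMeta τ θ T)

/-- Satisfaction of a single constraint. -/
def SatC (τ : ℕ → Option PseudoType) (θ : ℕ → Option ℕ) : Constr → Prop
  | .eqT T S => applyMeta τ θ T = applyMeta τ θ S
  | .eqE E E' => evalE θ E = evalE θ E'
  | .geE E E' => evalE θ E' ≤ evalE θ E
  | .ltE E E' => evalE θ E < evalE θ E'

/-- `σ = τ ∪ θ` is a solution (unifier) of the constraint set `C`. -/
def Satisfies (τ : ℕ → Option PseudoType) (θ : ℕ → Option ℕ)
    (C : Set Constr) : Prop := ∀ c ∈ C, SatC τ θ c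

/-- `σ = τ ∪ θ` is a type substitution: `θ` assigns natural numbers (by
typing) and every type variable in the domain of `τ` is mapped to a
(positive, regular and guarded) type. -/
def IsTypeSubst (τ : ℕ → Option PseudoType) : Prop :=
  ∀ X t, τ X = some t → IsType t

/-- Contexts of the constraint typing rules: they assign (distinct) type
variables to the expression variables. -/
def CCtx : Type := ℕ → Option ℕ

def CCtx.cons (X : ℕ) (Δ : CCtx) : CCtx :=
  fun n => match n with | 0 => some X | n + 1 => Δ n

/-- The variables (type variables, tagged `inl`) occurring in a constraint
typing context. -/
def ctxVars (Δ : CCtx) : Set (ℕ ⊕ ℕ) :=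
  {v | ∃ x X, Δ x = some X ∧ v = Sum.inl X}

/-- The types `Θ_k` of the polymorphic constants. -/
def thetaConst : Const → ℕ → ℕ → MetaTy
  | .pair, X₁, X₂ => .arrow (.tvar X₁) (.arrow (.tvar X₂) (.prod (.tvar X₁) (.tvar X₂)))
  | .cfst, X₁, X₂ => .arrow (.prod (.tvar X₁) (.tvar X₂)) (.tvar X₁)
  | .csnd, X₁, X₂ => .arrow (.prod (.tvar X₁) (.tvar X₂)) (.tvar X₂)
  | _, _, _ => .nat

/-- The constraint typing rules `Δ ⊩ e : T | C`.  The judgement is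
instrumented with the set `V` of fresh (type `inl` / integer `inr`)
variables introduced in the derivation; the side conditions express the
freshness requirements. -/
inductive CTypes : CCtx → Expr → MetaTy → Set Constr → Set (ℕ ⊕ ℕ) → Prop
  | ax {Δ x X N} : Δ x = some X →
      CTypes Δ (.var x) (.bullet (.ivar N) (.tvar X)) ∅ {Sum.inr N}
  | constK {Δ k X₁ X₂ N} :
      (k = Const.pair ∨ k = Const.cfst ∨ k = Const.csnd) →
      X₁ ≠ X₂ → Sum.inl X₁ ∉ ctxVars Δ → Sum.inl X₂ ∉ ctxVars Δ →
      CTypes Δ (.const k) (.bullet (.ivar N) (thetaConst k X₁ X₂)) ∅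
        {Sum.inl X₁, Sum.inl X₂, Sum.inr N}
  | constZero {Δ N} :
      CTypes Δ (.const .zero) (.bullet (.ivar N) .nat) ∅ {Sum.inr N}
  | constSucc {Δ N} :
      CTypes Δ (.const .succ) (.bullet (.ivar N) (.arrow .nat .nat)) ∅ {Sum.inr N}
  | arrowI {Δ e T C V X X₁ X₂ N} :
      CTypes (CCtx.cons X Δ) e T C V →
      Sum.inl X ∉ ctxVars Δ ∪ V →
      Sum.inl X₁ ∉ ctxVars Δ ∪ V ∪ {Sum.inl X} →
      Sum.inl X₂ ∉ ctxVars Δ ∪ V ∪ {Sum.inl X, Sum.inl X₁} →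
      Sum.inr N ∉ V →
      CTypes Δ (.lam e) (.bullet (.ivar N) (.arrow (.tvar X₁) (.tvar X₂)))
        (C ∪ {.eqT (.tvar X) (.bullet (.ivar N) (.tvar X₁)),
              .eqT T (.bullet (.ivar N) (.tvar X₂))})
        (V ∪ {Sum.inl X, Sum.inl X₁, Sum.inl X₂, Sum.inr N})
  | arrowE {Δ e₁ e₂ T₁ T₂ C₁ C₂ V₁ V₂ X₁ X₂ N} :
      CTypes Δ e₁ T₁ C₁ V₁ → CTypes Δ e₂ T₂ C₂ V₂ →
      V₁ ∩ V₂ = ∅ →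
      Sum.inl X₁ ∉ ctxVars Δ ∪ V₁ ∪ V₂ →
      Sum.inl X₂ ∉ ctxVars Δ ∪ V₁ ∪ V₂ ∪ {Sum.inl X₁} →
      Sum.inr N ∉ V₁ ∪ V₂ →
      CTypes Δ (.app e₁ e₂) (.bullet (.ivar N) (.tvar X₂))
        (C₁ ∪ C₂ ∪ {.eqT (.bullet (.ivar N) (.arrow (.tvar X₁) (.tvar X₂))) T₁,
                    .eqT (.bullet (.ivar N) (.tvar X₁)) T₂})
        (V₁ ∪ V₂ ∪ {Sum.inl X₁, Sum.inl X₂, Sum.inr N})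

/-- Application of a substitution to a constraint typing context. -/
def applyCCtx (τ : ℕ → Option PseudoType) (θ : ℕ → Option ℕ) (Δ : CCtx) : Ctx :=
  fun x => (Δ x).map (fun X => applyMeta τ θ (.tvar X))


section Aux

lemma child_mk {h : TyHead} {f : tyArity h → PseudoType} {s : PseudoType} :
    Child (PFunctor.M.mk ⟨h, f⟩) s ↔ ∃ b, f b = s := by
  unfold Child
  erw [PFunctor.M.dest_mk]
  rfl

lemma no_child_tvar {n : ℕ} {s : PseudoType} : ¬ Child (tvar n) s := by
  rintro h; erw [tvar, child_mk] at h; exact h.choose.elim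

lemma no_child_tnat {s : PseudoType} : ¬ Child tnat s := by
  rintro h; erw [tnat, child_mk] at h; exact h.choose.elim

lemma child_tarrow {t s u : PseudoType} (h : Child (tarrow t s) u) : u = t ∨ u = s := by
  erw [tarrow, child_mk] at h
  obtain ⟨b, hb⟩ := h
  cases b
  · exact Or.inl hb.symm
  · exact Or.inr hb.symm

lemma child_tprod {t s u : PseudoType} (h : Child (tprod t s) u) : u = t ∨ u = s := by
  erw [tprod, child_mk] at h
  obtain ⟨b, hb⟩ := h
  cases b
  · exact Or.inl hb.symm
  · exact Or.inr hb.symm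

lemma child_tbullet {t u : PseudoType} (h : Child (tbullet t) u) : u = t := by
  erw [tbullet, child_mk] at h
  obtain ⟨b, hb⟩ := h
  exact hb.symm

/-- A tree all of whose children are guarded is guarded. -/
lemma guarded_of_children {t : PseudoType} (h : ∀ u, Child t u → Guarded u) :
    Guarded t := by
  intro f hf0 hstep N
  have hc : Child t (f 1) := hf0 ▸ hstep 0
  obtain ⟨n, hn, hb⟩ := h _ hc (fun m => f (m + 1)) rfl (fun m => hstep (m + 1)) N
  exact ⟨n + 1, hn.trans (Nat.le_succ n), hb⟩

lemma subtree_two {t s v u : PseudoType}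
    (hch : ∀ w, Child v w → w = t ∨ w = s) (h : Subtree v u) :
    u = v ∨ Subtree t u ∨ Subtree s u := by
  rcases (Relation.ReflTransGen.cases_head h) with h | ⟨c, hc, hcu⟩
  · exact Or.inl h.symm
  · rcases hch c hc with rfl | rfl
    · exact Or.inr (Or.inl hcu)
    · exact Or.inr (Or.inr hcu)

lemma isType_tvar (n : ℕ) : IsType (tvar n) := by
  constructor
  · refine (Set.finite_singleton (tvar n)).subset ?_
    intro u hu
    rcases Relation.ReflTransGen.cases_head hu with h | ⟨c, hc, _⟩
    · exact h.symm
    · exact absurd hc no_child_tvar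
  · exact guarded_of_children (fun u hu => absurd hu no_child_tvar)

lemma isType_tnat : IsType tnat := by
  constructor
  · refine (Set.finite_singleton tnat).subset ?_
    intro u hu
    rcases Relation.ReflTransGen.cases_head hu with h | ⟨c, hc, _⟩
    · exact h.symm
    · exact absurd hc no_child_tnat
  · exact guarded_of_children (fun u hu => absurd hu no_child_tnat)

lemma isType_tarrow {t s : PseudoType} (ht : IsType t) (hs : IsType s) :
    IsType (tarrow t s) := by
  constructor
  · refine ((ht.1.union hs.1).insert (tarrow t s)).subset ?_
    intro u hu
    rcases subtree_two (fun _ => child_tarrow) hu with h | h | h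
    · exact Or.inl h
    · exact Or.inr (Or.inl h)
    · exact Or.inr (Or.inr h)
  · refine guarded_of_children (fun u hu => ?_)
    rcases child_tarrow hu with rfl | rfl
    · exact ht.2
    · exact hs.2

lemma isType_tprod {t s : PseudoType} (ht : IsType t) (hs : IsType s) :
    IsType (tprod t s) := by
  constructor
  · refine ((ht.1.union hs.1).insert (tprod t s)).subset ?_
    intro u hu
    rcases subtree_two (fun _ => child_tprod) hu with h | h | h
    · exact Or.inl h
    · exact Or.inr (Or.inl h)
    · exact Or.inr (Or.inr h)
  · refine guarded_of_children (fun u hu => ?_)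
    rcases child_tprod hu with rfl | rfl
    · exact ht.2
    · exact hs.2

lemma isType_tbullet {t : PseudoType} (ht : IsType t) : IsType (tbullet t) := by
  constructor
  · refine (ht.1.insert (tbullet t)).subset ?_
    intro u hu
    rcases Relation.ReflTransGen.cases_head hu with h | ⟨c, hc, hcu⟩
    · exact Or.inl h.symm
    · exact Or.inr (child_tbullet hc ▸ hcu)
  · exact guarded_of_children (fun u hu => (child_tbullet hu) ▸ ht.2)

lemma isType_tbulletN {t : PseudoType} (n : ℕ) (ht : IsType t) :
    IsType (tbulletN n t) := by
  induction n with
  | zero => exact ht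
  | succ n ih =>
      have : tbulletN (n + 1) t = tbullet (tbulletN n t) := by
        simp [tbulletN, Function.iterate_succ_apply']
      rw [this]
      exact isType_tbullet ih

lemma isType_applyVar {τ : ℕ → Option PseudoType} (hσ : IsTypeSubst τ)
    (θ : ℕ → Option ℕ) (X : ℕ) : IsType (applyMeta τ θ (.tvar X)) := by
  show IsType ((τ X).getD (tvar X))
  cases hX : τ X with
  | none => simpa using isType_tvar X
  | some t => simpa using hσ X t hX

lemma applyCCtx_cons (τ : ℕ → Option PseudoType) (θ : ℕ → Option ℕ)
    (X : ℕ) (Δ : CCtx) :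
    applyCCtx τ θ (CCtx.cons X Δ) =
      Ctx.cons (applyMeta τ θ (.tvar X)) (applyCCtx τ θ Δ) := by
  funext n
  cases n <;> rfl

end Aux

/-- Soundness of constraint typing: let `σ = τ ∪ θ` be a type
substitution.  If `Δ ⊩ e : T | C` and `σ ⊨ C` then `σ(Δ) ⊢ e : σ(T)` in
(λ•→)⁻ and `σ(T)` is a type. -/
theorem constraint_soundness (τ : ℕ → Option PseudoType) (θ : ℕ → Option ℕ)
    (hσ : IsTypeSubst τ) (Δ : CCtx) (e : Expr) (T : MetaTy)
    (C : Set Constr) (V : Set (ℕ ⊕ ℕ))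
    (h : CTypes Δ e T C V) (hsat : Satisfies τ θ C) :
    TypesSD (applyCCtx τ θ Δ) e (applyMeta τ θ T) ∧
      IsType (applyMeta τ θ T) := by

  induction h with
  | @ax Δ x X N hx =>
      refine ⟨TypesSD.ax (evalE θ (.ivar N)).toNat ?_ (isType_applyVar hσ θ X),
        isType_tbulletN _ (isType_applyVar hσ θ X)⟩
      simp [applyCCtx, hx]
  | @constK Δ k X₁ X₂ N hk _ _ _ =>
      have h1 := isType_applyVar hσ θ X₁
      have h2 := isType_applyVar hσ θ X₂
      rcases hk with rfl | rfl | rfl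
      · exact ⟨TypesSD.const _ (KappaTy.pair h1 h2),
          isType_tbulletN _ (isType_tarrow h1 (isType_tarrow h2 (isType_tprod h1 h2)))⟩
      · exact ⟨TypesSD.const _ (KappaTy.fst h1 h2),
          isType_tbulletN _ (isType_tarrow (isType_tprod h1 h2) h1)⟩
      · exact ⟨TypesSD.const _ (KappaTy.snd h1 h2),
          isType_tbulletN _ (isType_tarrow (isType_tprod h1 h2) h2)⟩
  | @constZero Δ N =>
      exact ⟨TypesSD.const _ KappaTy.zero, isType_tbulletN _ isType_tnat⟩
  | @constSucc Δ N =>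
      exact ⟨TypesSD.const _ KappaTy.succ,
        isType_tbulletN _ (isType_tarrow isType_tnat isType_tnat)⟩
  | @arrowI Δ e T C V X X₁ X₂ N hct _ _ _ _ ih =>
      have hC : Satisfies τ θ C := fun c hc => hsat c (Or.inl hc)
      have hc1 : applyMeta τ θ (.tvar X) =
          applyMeta τ θ (.bullet (.ivar N) (.tvar X₁)) :=
        hsat (.eqT (.tvar X) (.bullet (.ivar N) (.tvar X₁)))
          (Or.inr (Set.mem_insert _ _))
      have hc2 : applyMeta τ θ T =
          applyMeta τ θ (.bullet (.ivar N) (.tvar X₂)) :=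
        hsat (.eqT T (.bullet (.ivar N) (.tvar X₂)))
          (Or.inr (Set.mem_insert_of_mem _ rfl))
      obtain ⟨hty, _⟩ := ih hC
      rw [applyCCtx_cons, hc1, hc2] at hty
      have h1 := isType_applyVar hσ θ X₁
      have h2 := isType_applyVar hσ θ X₂
      exact ⟨TypesSD.arrowI hty, isType_tbulletN _ (isType_tarrow h1 h2)⟩
  | @arrowE Δ e₁ e₂ T₁ T₂ C₁ C₂ V₁ V₂ X₁ X₂ N hct1 hct2 _ _ _ _ ih1 ih2 =>
      have hC1 : Satisfies τ θ C₁ := fun c hc => hsat c (Or.inl (Or.inl hc))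
      have hC2 : Satisfies τ θ C₂ := fun c hc => hsat c (Or.inl (Or.inr hc))
      have hc1 : applyMeta τ θ (.bullet (.ivar N) (.arrow (.tvar X₁) (.tvar X₂))) =
          applyMeta τ θ T₁ :=
        hsat (.eqT (.bullet (.ivar N) (.arrow (.tvar X₁) (.tvar X₂))) T₁)
          (Or.inr (Set.mem_insert _ _))
      have hc2 : applyMeta τ θ (.bullet (.ivar N) (.tvar X₁)) =
          applyMeta τ θ T₂ :=
        hsat (.eqT (.bullet (.ivar N) (.tvar X₁)) T₂)
          (Or.inr (Set.mem_insert_of_mem _ rfl))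
      obtain ⟨hty1, _⟩ := ih1 hC1
      obtain ⟨hty2, _⟩ := ih2 hC2
      rw [← hc1] at hty1
      rw [← hc2] at hty2
      exact ⟨TypesSD.arrowE hty1 hty2,
        isType_tbulletN _ (isType_applyVar hσ θ X₂)⟩

end LambdaBullet
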